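/- arXiv:1402.6976 — 4 statements merged into one kernel-verified Lean document; each statement's English description precedes it below -/
import Mathlib

section
/- Christoffel–Darboux formula: let (P_n)_{n∈ℕ} be real polynomials satisfying the three-term recurrence t P_n(t) = a_n P_{n+1}(t) + b_n P_n(t) + a_{n−1} P_{n−1}(t) for n ≥ 1 and t P_0(t) = a_0 P_1(t) + b_0 P_0(t), with a_n > 0 and b_n ∈ ℝ. Then for all t, z ∈ ℝ and all n ∈ ℕ: (t − z) Σ_{k=0}^{n} P_k(t) P_k(z) = a_n (P_{n+1}(t) P_n(z) − P_n(t) P_{n+1}(z)). -/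
/-- Christoffel–Darboux formula: for polynomials satisfying the three-term
recurrence with `a n > 0`, one has
`(t − z) Σ_{k=0}^{n} P_k(t) P_k(z) = a_n (P_{n+1}(t) P_n(z) − P_n(t) P_{n+1}(z))`. -/
theorem christoffel_darboux
    (a b : ℕ → ℝ) (ha : ∀ n, 0 < a n) (P : ℕ → Polynomial ℝ)
    (hrec0 : ∀ t : ℝ, t * (P 0).eval t = a 0 * (P 1).eval t + b 0 * (P 0).eval t)
    (hrec : ∀ n : ℕ, 1 ≤ n → ∀ t : ℝ,
      t * (P n).eval t
        = a n * (P (n + 1)).eval t + b n * (P n).eval t + a (n - 1) * (P (n - 1)).eval t) :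
    ∀ (t z : ℝ) (n : ℕ),
      (t - z) * ∑ k ∈ Finset.range (n + 1), (P k).eval t * (P k).eval z
        = a n * ((P (n + 1)).eval t * (P n).eval z - (P n).eval t * (P (n + 1)).eval z) := by
  intro t z n
  induction n with
  | zero =>
    rw [Finset.sum_range_one]
    linear_combination (P 0).eval z * hrec0 t - (P 0).eval t * hrec0 z
  | succ n ih =>
    rw [Finset.sum_range_succ]
    have ht := hrec (n + 1) (by omega) t
    have hz := hrec (n + 1) (by omega) z
    simp only [Nat.add_sub_cancel] at ht hz
    linear_combination ih + (P (n + 1)).eval z * ht - (P (n + 1)).eval t * hz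
end

section
/- Let J^N ∈ M_N(ℝ) be the symmetric tridiagonal matrix with diagonal entries (J^N)_{mm} = b_m (0 ≤ m ≤ N−1) and sub/superdiagonal entries (J^N)_{m,m+1} = (J^N)_{m+1,m} = a_m (0 ≤ m ≤ N−2), where a_m > 0 and b_m ∈ ℝ, and let (P_n) be the associated orthonormal-recurrence polynomials with P_0 = 1. Then a real number t₀ is an eigenvalue of J^N if and only if P_N(t₀) = 0. -/
lemma mulVec_tridiag {N : ℕ} (a b : ℕ → ℝ)
    (JN : Matrix (Fin N) (Fin N) ℝ)
    (hJN : ∀ m l : Fin N, JN m l =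
      if (m : ℕ) = l then b m
      else if (m : ℕ) + 1 = l then a m
      else if (l : ℕ) + 1 = m then a l
      else 0)
    (v : Fin N → ℝ) (m : Fin N) :
    JN.mulVec v m = b m * v m
      + (if h : (m:ℕ)+1 < N then a m * v ⟨(m:ℕ)+1, h⟩ else 0)
      + (if h : 0 < (m:ℕ) then a ((m:ℕ)-1) * v ⟨(m:ℕ)-1, lt_of_le_of_lt (Nat.sub_le _ _) m.isLt⟩ else 0) := by
  have key : ∀ l : Fin N, JN m l * v l =
      (if (l:ℕ) = (m:ℕ) then b m * v l else 0)
    + (if (l:ℕ) = (m:ℕ)+1 then a m * v l else 0)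
    + (if (l:ℕ)+1 = (m:ℕ) then a ((m:ℕ)-1) * v l else 0) := by
    intro l
    rw [hJN]
    split_ifs <;>
      first
      | (exfalso; omega)
      | ring1
      | (have h2 : (m:ℕ) - 1 = (l:ℕ) := by omega
         rw [h2]; ring1)
  show ∑ l, JN m l * v l = _
  rw [Finset.sum_congr rfl (fun l _ => key l), Finset.sum_add_distrib,
    Finset.sum_add_distrib]
  congr 1
  · congr 1
    · have e : ∀ l : Fin N, ((l:ℕ) = (m:ℕ)) = (l = m) := by
        intro l; simp [Fin.ext_iff]
      simp only [e]
      rw [Finset.sum_ite_eq' Finset.univ]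
      simp
    · split_ifs with h
      · have e : ∀ l : Fin N, ((l:ℕ) = (m:ℕ)+1) = (l = (⟨(m:ℕ)+1, h⟩ : Fin N)) := by
          intro l; simp [Fin.ext_iff]
        simp only [e]
        rw [Finset.sum_ite_eq' Finset.univ]
        simp
      · apply Finset.sum_eq_zero
        intro l _
        rw [if_neg]
        omega
  · split_ifs with h
    · have e : ∀ l : Fin N, ((l:ℕ)+1 = (m:ℕ)) = (l = (⟨(m:ℕ)-1, lt_of_le_of_lt (Nat.sub_le _ _) m.isLt⟩ : Fin N)) := by
        intro l; simp only [Fin.ext_iff]; simp; omega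
      simp only [e]
      rw [Finset.sum_ite_eq' Finset.univ]
      simp
    · apply Finset.sum_eq_zero
      intro l _
      rw [if_neg]
      omega

/-- `t₀` is an eigenvalue of the `N × N` symmetric tridiagonal truncation `J^N`
(diagonal `b`, sub/superdiagonal `a`) if and only if `t₀` is a zero of the `N`-th orthonormal
recurrence polynomial `P N` (normalized by `P 0 = 1`). -/
theorem eigenvalue_truncated_jacobi_iff_root
    (a b : ℕ → ℝ) (ha : ∀ n, 0 < a n) (P : ℕ → Polynomial ℝ)
    (hP0 : P 0 = 1)
    (hrec0 : ∀ t : ℝ, t * (P 0).eval t = a 0 * (P 1).eval t + b 0 * (P 0).eval t)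
    (hrec : ∀ n : ℕ, 1 ≤ n → ∀ t : ℝ,
      t * (P n).eval t
        = a n * (P (n + 1)).eval t + b n * (P n).eval t + a (n - 1) * (P (n - 1)).eval t)
    (N : ℕ) (hN : 1 ≤ N)
    (JN : Matrix (Fin N) (Fin N) ℝ)
    (hJN : ∀ m l : Fin N, JN m l =
      if (m : ℕ) = l then b m
      else if (m : ℕ) + 1 = l then a m
      else if (l : ℕ) + 1 = m then a l
      else 0)
    (t₀ : ℝ) :
    (∃ v : Fin N → ℝ, v ≠ 0 ∧ JN.mulVec v = t₀ • v) ↔ (P N).eval t₀ = 0 := by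
  have h0 : 0 < N := hN
  have e0 : t₀ = a 0 * (P 1).eval t₀ + b 0 := by
    have := hrec0 t₀
    rw [hP0] at this
    simpa using this
  constructor
  · rintro ⟨v, hv0, hv⟩
    have rowN : ∀ k (hk : k < N),
        b k * v ⟨k, hk⟩
          + (dite (k+1 < N) (fun h => a k * v ⟨k+1, h⟩) (fun _ => (0:ℝ)))
          + (dite (0 < k) (fun h => a (k-1) * v ⟨k-1, by omega⟩) (fun _ => (0:ℝ)))
        = t₀ * v ⟨k, hk⟩ := by
      intro k hk
      have h1 := mulVec_tridiag a b JN hJN v ⟨k, hk⟩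
      have h2 : JN.mulVec v ⟨k, hk⟩ = t₀ * v ⟨k, hk⟩ := by rw [hv]; simp
      exact h1.symm.trans h2
    have key : ∀ k, ∀ hk : k < N, v ⟨k, hk⟩ = v ⟨0, h0⟩ * (P k).eval t₀ := by
      intro k
      induction k using Nat.strong_induction_on with
      | _ k ih =>
        rcases k with _ | j
        · intro hk
          simp [hP0]
        · intro hk
          have hj : j < N := by omega
          have hr := rowN j hj
          rw [dif_pos hk] at hr
          rcases Nat.eq_zero_or_pos j with hj0 | hj1
          · subst hj0
            rw [dif_neg (by omega)] at hr
            have hv1 : a 0 * v ⟨1, hk⟩ = a 0 * (v ⟨0, h0⟩ * (P 1).eval t₀) := by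
              have hvv : v ⟨0, hj⟩ = v ⟨0, h0⟩ := rfl
              rw [hvv] at hr
              linear_combination hr + v ⟨0, h0⟩ * e0 - (b 0) * (rfl : v ⟨0,h0⟩ = v ⟨0,h0⟩)
            exact mul_left_cancel₀ (ha 0).ne' hv1
          · rw [dif_pos hj1] at hr
            have e := hrec j hj1 t₀
            have ihk := ih j (by omega) hj
            have ihk1 := ih (j-1) (by omega) (by omega : j - 1 < N)
            have hv1 : a j * v ⟨j+1, hk⟩ = a j * (v ⟨0, h0⟩ * (P (j+1)).eval t₀) := by
              linear_combination hr + v ⟨0, h0⟩ * e - (b j - t₀) * ihk - a (j-1) * ihk1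
            exact mul_left_cancel₀ (ha j).ne' hv1
    have hv00 : v ⟨0, h0⟩ ≠ 0 := by
      intro h00
      apply hv0
      funext i
      have hki := key i i.isLt
      rw [h00, zero_mul] at hki
      simpa using hki
    have hNlt : N - 1 < N := by omega
    have hr := rowN (N-1) hNlt
    rw [dif_neg (by omega)] at hr
    rcases eq_or_lt_of_le hN with h1 | h2
    · -- N = 1
      have hN1 : N = 1 := h1.symm
      subst hN1
      rw [dif_neg (by omega)] at hr
      have k0 : v ⟨1-1, hNlt⟩ = v ⟨0, h0⟩ := rfl
      have kb : b (1-1) = b 0 := rfl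
      rw [k0, kb] at hr
      have hzz : a 0 * (P 1).eval t₀ * v ⟨0, h0⟩ = 0 := by
        linear_combination -hr - v ⟨0, h0⟩ * e0
      rcases mul_eq_zero.mp hzz with hz | hz
      · rcases mul_eq_zero.mp hz with hz' | hz'
        · exact absurd hz' (ha 0).ne'
        · exact hz'
      · exact absurd hz hv00
    · -- N ≥ 2
      rw [dif_pos (by omega : 0 < N - 1)] at hr
      have e := hrec (N-1) (by omega) t₀
      have hN1 : N - 1 + 1 = N := by omega
      rw [hN1] at e
      have kA := key (N-1) hNlt
      have kB := key (N-1-1) (by omega : N - 1 - 1 < N)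
      have hzz : a (N-1) * (P N).eval t₀ * v ⟨0, h0⟩ = 0 := by
        linear_combination -hr - v ⟨0, h0⟩ * e + (b (N-1) - t₀) * kA + a (N-1-1) * kB
      rcases mul_eq_zero.mp hzz with hz | hz
      · rcases mul_eq_zero.mp hz with hz' | hz'
        · exact absurd hz' (ha (N-1)).ne'
        · exact hz'
      · exact absurd hz hv00
  · intro hroot
    refine ⟨fun i => (P (i:ℕ)).eval t₀, ?_, ?_⟩
    · intro hzero
      have := congrFun hzero ⟨0, h0⟩
      simp [hP0] at this
    · funext m
      rw [mulVec_tridiag a b JN hJN]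
      simp only [Pi.smul_apply, smul_eq_mul]
      by_cases h1 : (m:ℕ)+1 < N <;> by_cases h2 : 0 < (m:ℕ)
      · rw [dif_pos h1, dif_pos h2]
        have e := hrec (m:ℕ) h2 t₀
        linear_combination -e
      · rw [dif_pos h1, dif_neg h2]
        have hm0 : (m:ℕ) = 0 := by omega
        simp only [hm0]
        linear_combination -(hrec0 t₀)
      · rw [dif_neg h1, dif_pos h2]
        have hm : (m:ℕ)+1 = N := by omega
        have e := hrec (m:ℕ) h2 t₀
        rw [hm, hroot] at e
        linear_combination -e
      · rw [dif_neg h1, dif_neg h2]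
        have hm0 : (m:ℕ) = 0 := by omega
        have hN1 : N = 1 := by omega
        have e := hrec0 t₀
        rw [hN1] at hroot
        rw [hroot] at e
        simp only [hm0]
        linear_combination -e
end

section
/- Let (P_n) be the polynomials determined by the three-term recurrence with coefficients a_m > 0, b_m ∈ ℝ and normalization P_0 = 1. Then for every N ≥ 1 the polynomial P_N has exactly N roots, all real and simple (pairwise distinct). Moreover, if the associated Jacobi operator J on ℓ²(ℕ) is bounded, every root of P_N lies in the interval [−‖J‖, ‖J‖]. -/
open MeasureTheory Finset Polynomial
open scoped InnerProductSpace ComplexConjugate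

/-- The canonical orthonormal basis vectors of `ℓ²(ℕ)`. -/
noncomputable def e (m : ℕ) : lp (fun _ : ℕ => ℂ) 2 := lp.single 2 m (1 : ℂ)

lemma inner_e (i j : ℕ) : ⟪e i, e j⟫_ℂ = if i = j then 1 else 0 := by
  rw [e, e, lp.inner_single_left, lp.single_apply]
  by_cases h : i = j <;> simp [h, RCLike.inner_apply]

section Jac
variable (a b : ℕ → ℝ)
  (J : lp (fun _ : ℕ => ℂ) 2 →L[ℂ] lp (fun _ : ℕ => ℂ) 2)
  (hJ0 : J (e 0) = (a 0 : ℂ) • e 1 + (b 0 : ℂ) • e 0)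
  (hJ : ∀ m : ℕ, 1 ≤ m →
      J (e m) = (a m : ℂ) • e (m + 1) + (b m : ℂ) • e m + (a (m - 1) : ℂ) • e (m - 1))

-- matrix entries
def M (m n : ℕ) : ℝ :=
  if m = n then b n else if m = n + 1 then a n else if n = m + 1 then a m else 0

lemma M_symm (m n : ℕ) : M a b m n = M a b n m := by
  unfold M
  rcases eq_or_ne m n with h | h
  · simp [h]
  · simp only [if_neg h, if_neg (Ne.symm h)]
    rcases eq_or_ne m (n+1) with h1 | h1
    · simp [h1, show ¬ (n = n + 1 + 1) by omega]
    · simp only [if_neg h1, if_neg (Ne.symm h)]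

include hJ0 hJ in
lemma inner_e_J (m n : ℕ) : ⟪e m, J (e n)⟫_ℂ = ((M a b m n : ℝ) : ℂ) := by
  unfold M
  rcases n with _ | k
  · rw [hJ0, inner_add_right, inner_smul_right, inner_smul_right, inner_e, inner_e]
    rcases eq_or_ne m 0 with h | h
    · simp [h]
    · rcases eq_or_ne m 1 with h1 | h1 <;> simp [h, h1]
  · rw [hJ (k+1) (by omega), inner_add_right, inner_add_right, inner_smul_right,
      inner_smul_right, inner_smul_right, inner_e, inner_e, inner_e]
    simp only [Nat.add_sub_cancel]
    rcases eq_or_ne m (k+1) with h | h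
    · simp [h, show ¬ (k+1 = k+1+1) by omega, show ¬ (k+1 = k) by omega]
    · rcases eq_or_ne m (k+2) with h1 | h1
      · simp [h1, show ¬ (k+2 = k+1) by omega, show ¬(k+2=k) by omega, show k+1+1 = k+2 by omega]
      · rcases eq_or_ne m k with h2 | h2
        · simp [h2, show ¬(k = k+1) by omega, show ¬(k=k+1+1) by omega, show ¬(k+1=k+1+1)by omega]
        · simp [h, h1, h2, show ¬(m = k+1+1) by omega, show ¬(k+1 = m+1) by omega, show ¬(k = m) by omega]

include hJ0 hJ in
lemma key_sum (c : ℕ → ℂ) (z : ℂ) (hc0 : c 0 = 1)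
    (hq0 : z * c 0 = a 0 * c 1 + b 0 * c 0)
    (hq : ∀ n : ℕ, 1 ≤ n → z * c n = a n * c (n+1) + b n * c n + a (n-1) * c (n-1)) :
    ∀ n : ℕ, 1 ≤ n → J (∑ m ∈ range n, c m • e m)
      = z • (∑ m ∈ range n, c m • e m)
        - ((a (n-1) : ℂ) * c n) • e (n-1) + ((a (n-1) : ℂ) * c (n-1)) • e n := by
  intro n hn
  induction n, hn using Nat.le_induction with
  | base =>
    simp only [range_one, sum_singleton, Nat.sub_self, hc0, one_smul, _root_.map_smul, hJ0]
    rw [hc0, mul_one] at hq0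
    linear_combination (norm := module) (-hq0) • (e 0)
  | succ n hn ih =>
    rw [sum_range_succ, map_add, _root_.map_smul, ih, hJ n hn, Nat.add_sub_cancel]
    have hrec := hq n hn
    linear_combination (norm := module) (-hrec) • (e n)

include hJ0 hJ in
lemma root_real_bounded (c : ℕ → ℂ) (z : ℂ) (hc0 : c 0 = 1)
    (hq0 : z * c 0 = a 0 * c 1 + b 0 * c 0)
    (hq : ∀ n : ℕ, 1 ≤ n → z * c n = a n * c (n+1) + b n * c n + a (n-1) * c (n-1))
    (N : ℕ) (hN : 1 ≤ N) (hroot : c N = 0) :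
    z.im = 0 ∧ ‖z‖ ≤ ‖J‖ := by
  set x : lp (fun _ : ℕ => ℂ) 2 := ∑ m ∈ range N, c m • e m with hxdef
  have hx : J x = z • x + ((a (N-1) : ℂ) * c (N-1)) • e N := by
    rw [hxdef, key_sum a b J hJ0 hJ c z hc0 hq0 hq N hN, hroot]
    simp
  have hxeN : ⟪x, e N⟫_ℂ = 0 := by
    rw [hxdef, sum_inner]
    refine Finset.sum_eq_zero fun m hm => ?_
    rw [inner_smul_left, inner_e, if_neg (by simp only [mem_range] at hm; omega)]
    simp
  have hx0 : ⟪e 0, x⟫_ℂ = 1 := by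
    rw [hxdef, inner_sum]
    simp only [inner_smul_right, inner_e, mul_ite, mul_one, mul_zero]
    rw [Finset.sum_ite_eq]
    simp [mem_range, hN, hc0]
    omega
  have hxne : x ≠ 0 := by
    intro h
    rw [h, inner_zero_right] at hx0
    exact zero_ne_one hx0
  have hnx : 0 < ‖x‖ := norm_pos_iff.mpr hxne
  have hinner : ⟪x, J x⟫_ℂ = z * ⟪x, x⟫_ℂ := by
    rw [hx, inner_add_right, inner_smul_right, inner_smul_right, hxeN]
    ring
  have hS : ⟪x, J x⟫_ℂ
      = ∑ m ∈ range N, ∑ n ∈ range N, conj (c m) * (c n * ((M a b m n : ℝ) : ℂ)) := by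
    have hJx : J x = ∑ n ∈ range N, c n • J (e n) := by
      rw [hxdef, map_sum]
      simp only [_root_.map_smul]
    rw [hJx, hxdef, sum_inner]
    refine Finset.sum_congr rfl fun m _ => ?_
    rw [inner_smul_left, inner_sum, Finset.mul_sum]
    refine Finset.sum_congr rfl fun n _ => ?_
    rw [inner_smul_right, inner_e_J a b J hJ0 hJ]
  have hconj : conj (⟪x, J x⟫_ℂ) = ⟪x, J x⟫_ℂ := by
    rw [hS]
    calc conj (∑ m ∈ range N, ∑ n ∈ range N, conj (c m) * (c n * ((M a b m n : ℝ) : ℂ)))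
        = ∑ m ∈ range N, ∑ n ∈ range N, c m * (conj (c n) * ((M a b m n : ℝ) : ℂ)) := by
          simp [map_sum, map_mul, Complex.conj_conj, Complex.conj_ofReal]
      _ = ∑ n ∈ range N, ∑ m ∈ range N, c m * (conj (c n) * ((M a b m n : ℝ) : ℂ)) :=
          Finset.sum_comm
      _ = ∑ m ∈ range N, ∑ n ∈ range N, conj (c m) * (c n * ((M a b m n : ℝ) : ℂ)) := by
          refine Finset.sum_congr rfl fun m _ => Finset.sum_congr rfl fun n _ => ?_
          rw [M_symm]
          ring
  have hZB : conj z * ⟪x, x⟫_ℂ = z * ⟪x, x⟫_ℂ := by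
    have h5 := hconj
    rw [hinner] at h5
    rwa [map_mul, inner_self_conj] at h5
  have hBne : ⟪x, x⟫_ℂ ≠ 0 := inner_self_ne_zero.mpr hxne
  have hzconj : conj z = z := mul_right_cancel₀ hBne hZB
  constructor
  · exact Complex.conj_eq_iff_im.mp hzconj
  · have h1 : ‖⟪x, J x⟫_ℂ‖ ≤ ‖x‖ * ‖J x‖ := norm_inner_le_norm x (J x)
    have h2 : ‖J x‖ ≤ ‖J‖ * ‖x‖ := J.le_opNorm x
    have h3 : ‖⟪x, J x⟫_ℂ‖ = ‖z‖ * ‖x‖^2 := by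
      rw [hinner, norm_mul, inner_self_eq_norm_sq_to_K, norm_pow]
      simp [RCLike.norm_ofReal, abs_of_pos hnx]
    have h4 : ‖z‖ * ‖x‖^2 ≤ ‖J‖ * ‖x‖^2 := by
      calc ‖z‖ * ‖x‖^2 = ‖⟪x, J x⟫_ℂ‖ := h3.symm
        _ ≤ ‖x‖ * ‖J x‖ := h1
        _ ≤ ‖x‖ * (‖J‖ * ‖x‖) := mul_le_mul_of_nonneg_left h2 (norm_nonneg x)
        _ = ‖J‖ * ‖x‖^2 := by ring
    exact le_of_mul_le_mul_right h4 (pow_pos hnx 2)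
end Jac



lemma aux_card : ∀ (n : ℕ) (p : Polynomial ℝ), p ≠ 0 → p.natDegree = n →
    (∀ z : ℂ, (p.map (algebraMap ℝ ℂ)).eval z = 0 → z.im = 0) → p.roots.card = n := by
  intro n
  induction n with
  | zero =>
    intro p hp h0 _
    have h1 := p.card_roots' -- card ≤ natDegree
    omega
  | succ n ih =>
    intro p hp hdeg hreal
    have hmapne : p.map (algebraMap ℝ ℂ) ≠ 0 := by
      simpa using (Polynomial.map_ne_zero hp : p.map (algebraMap ℝ ℂ) ≠ 0)
    have hdegmap : (p.map (algebraMap ℝ ℂ)).natDegree = n + 1 := by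
      rw [Polynomial.natDegree_map]; exact hdeg
    have hdpos : 0 < (p.map (algebraMap ℝ ℂ)).degree := by
      rw [Polynomial.degree_eq_natDegree hmapne, hdegmap]
      exact_mod_cast Nat.succ_pos n
    obtain ⟨z, hz⟩ := Complex.exists_root hdpos
    have him : z.im = 0 := hreal z hz
    set t : ℝ := z.re with ht
    have hzt : z = (t : ℂ) := Complex.ext rfl him
    have hroott : p.IsRoot t := by
      have h2 : (p.map (algebraMap ℝ ℂ)).eval ((algebraMap ℝ ℂ) t) = algebraMap ℝ ℂ (p.eval t) := by
        rw [Polynomial.eval_map, Polynomial.eval₂_at_apply]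
      rw [hzt] at hz
      have h3 : algebraMap ℝ ℂ (p.eval t) = 0 := by rw [← h2]; exact hz
      simpa using h3
    obtain ⟨q, hq⟩ := (Polynomial.dvd_iff_isRoot.mpr hroott)
    have hqne : q ≠ 0 := by
      intro h
      rw [h, mul_zero] at hq
      exact hp hq
    have hXne : (X - C t : Polynomial ℝ) ≠ 0 := X_sub_C_ne_zero t
    have hdq : q.natDegree = n := by
      have := Polynomial.natDegree_mul hXne hqne
      rw [← hq, Polynomial.natDegree_X_sub_C, hdeg] at this
      omega
    have hrealq : ∀ z : ℂ, (q.map (algebraMap ℝ ℂ)).eval z = 0 → z.im = 0 := by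
      intro w hw
      apply hreal w
      rw [hq, Polynomial.map_mul, Polynomial.eval_mul, hw, mul_zero]
    have hcards : p.roots = (X - C t).roots + q.roots := by
      rw [hq, Polynomial.roots_mul (hq ▸ hp)]
    rw [hcards, Multiset.card_add, Polynomial.roots_X_sub_C, Multiset.card_singleton,
      ih q hqne hdq hrealq]
    omega



section Deg
variable (a b : ℕ → ℝ) (ha : ∀ n, 0 < a n) (P : ℕ → Polynomial ℝ) (hP0 : P 0 = 1)
  (hpoly0 : C (a 0) * P 1 = X - C (b 0))
  (hpolyn : ∀ n, 1 ≤ n →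
    X * P n = C (a n) * P (n+1) + C (b n) * P n + C (a (n-1)) * P (n-1))

include ha hP0 hpoly0 hpolyn in
lemma deg_lemma : ∀ n : ℕ, (P n).natDegree = n ∧ 0 < (P n).leadingCoeff := by
  have key : ∀ n : ℕ, ((P n).natDegree = n ∧ 0 < (P n).leadingCoeff) ∧
      ((P (n+1)).natDegree = n + 1 ∧ 0 < (P (n+1)).leadingCoeff) := by
    intro n
    induction n with
    | zero =>
      have h0 : (P 0).natDegree = 0 ∧ 0 < (P 0).leadingCoeff := by
        rw [hP0]; simp
      refine ⟨h0, ?_, ?_⟩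
      · have := congrArg natDegree hpoly0
        rwa [natDegree_C_mul (ne_of_gt (ha 0)), natDegree_X_sub_C] at this
      · have := congrArg leadingCoeff hpoly0
        rw [leadingCoeff_mul, leadingCoeff_C, (monic_X_sub_C (b 0)).leadingCoeff] at this
        nlinarith [ha 0, this]
    | succ n ihn =>
      obtain ⟨⟨hdn, hln⟩, hd1, hl1⟩ := ihn
      refine ⟨⟨hd1, hl1⟩, ?_, ?_⟩ <;>
      · have hr := hpolyn (n+1) (by omega)
        simp only [Nat.add_sub_cancel] at hr
        have h1 : C (a (n+1)) * P (n+2) = (X - C (b (n+1))) * P (n+1) - C (a n) * P n := by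
          linear_combination -hr
        have hP1ne : P (n+1) ≠ 0 := leadingCoeff_ne_zero.mp (ne_of_gt hl1)
        have hPnne : P n ≠ 0 := leadingCoeff_ne_zero.mp (ne_of_gt hln)
        have hXne : (X - C (b (n+1)) : Polynomial ℝ) ≠ 0 := X_sub_C_ne_zero _
        have hRne : (X - C (b (n+1))) * P (n+1) ≠ 0 := mul_ne_zero hXne hP1ne
        have hdR : ((X - C (b (n+1))) * P (n+1)).natDegree = n + 2 := by
          rw [natDegree_mul hXne hP1ne, natDegree_X_sub_C, hd1]
          omega
        have hdD : (C (a n) * P n).natDegree = n := by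
          rw [natDegree_C_mul (ne_of_gt (ha n)), hdn]
        have hdlt : (C (a n) * P n).degree < ((X - C (b (n+1))) * P (n+1)).degree := by
          apply lt_of_le_of_lt (degree_le_natDegree)
          rw [degree_eq_natDegree hRne, hdR, hdD]
          exact_mod_cast Nat.lt_succ_of_lt (Nat.lt_succ_self n)
        have hdeq : (C (a (n+1)) * P (n+2)).natDegree = n + 2 := by
          rw [h1, natDegree_sub_eq_left_of_natDegree_lt, hdR]
          rw [hdR, hdD]; omega
        have hlceq : (C (a (n+1)) * P (n+2)).leadingCoeff = (P (n+1)).leadingCoeff := by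
          rw [h1, leadingCoeff_sub_of_degree_lt hdlt, leadingCoeff_mul,
            (monic_X_sub_C (b (n+1))).leadingCoeff, one_mul]
        rw [natDegree_C_mul (ne_of_gt (ha (n+1)))] at hdeq
        rw [leadingCoeff_mul, leadingCoeff_C] at hlceq
        first
        | exact hdeq
        | nlinarith [ha (n+1), hl1, hlceq]
  exact fun n => (key n).1

include ha hP0 hpoly0 hpolyn in
lemma cd_lemma : ∀ n : ℕ, C (a n) * (derivative (P (n+1)) * P n - P (n+1) * derivative (P n))
    = ∑ k ∈ Finset.range (n+1), (P k)^2 := by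
  intro n
  induction n with
  | zero =>
    have hd : C (a 0) * derivative (P 1) = 1 := by
      have h := congrArg derivative hpoly0
      rwa [derivative_mul, derivative_C, zero_mul, zero_add, derivative_sub,
        derivative_X, derivative_C, sub_zero] at h
    rw [hP0]
    rw [show (0:ℕ) + 1 = 1 from rfl, Finset.range_one, Finset.sum_singleton, hP0]
    simp only [derivative_one]
    linear_combination hd
  | succ n ih =>
    have hr := hpolyn (n+1) (by omega)
    simp only [Nat.add_sub_cancel] at hr
    have hd := congrArg derivative hr
    simp only [derivative_mul, derivative_X, derivative_add, derivative_C, zero_mul,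
      zero_add, one_mul] at hd
    rw [Finset.sum_range_succ, ← ih]
    linear_combination (derivative (P (n+1))) * hr - (P (n+1)) * hd

include ha hP0 hpoly0 hpolyn in
lemma simple_root_lemma : ∀ N : ℕ, 1 ≤ N → ∀ t : ℝ, (P N).eval t = 0 →
    (derivative (P N)).eval t ≠ 0 := by
  intro N hN t hroot
  obtain ⟨n, rfl⟩ : ∃ n, N = n + 1 := ⟨N - 1, by omega⟩
  have h := congrArg (Polynomial.eval t) (cd_lemma a b ha P hP0 hpoly0 hpolyn n)
  rw [eval_mul, eval_C, eval_sub, eval_mul, eval_mul, hroot, zero_mul, sub_zero,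
    eval_finset_sum] at h
  have hsum : (1 : ℝ) ≤ ∑ k ∈ Finset.range (n+1), ((P k)^2).eval t := by
    have h0 : ((P 0)^2).eval t = 1 := by rw [hP0]; simp
    have h2 := Finset.single_le_sum (f := fun k => ((P k)^2).eval t)
      (fun k _ => by show (0:ℝ) ≤ ((P k)^2).eval t; rw [eval_pow]; positivity)
      (Finset.mem_range.mpr (by omega : 0 < n + 1))
    rw [h0] at h2
    exact h2
  intro hzero
  rw [hzero, zero_mul, mul_zero] at h
  rw [← h] at hsum
  linarith

include ha hP0 hpoly0 hpolyn in
lemma nodup_lemma : ∀ N : ℕ, 1 ≤ N → (P N).roots.Nodup := by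
  intro N hN
  rw [Multiset.nodup_iff_count_le_one]
  intro t
  classical
  rw [Polynomial.count_roots]
  by_cases hroot : (P N).eval t = 0
  · by_contra hcon
    push_neg at hcon
    have h2 : 2 ≤ rootMultiplicity t (P N) := hcon
    have hPne : P N ≠ 0 := by
      have := (deg_lemma a b ha P hP0 hpoly0 hpolyn N).2
      exact leadingCoeff_ne_zero.mp (ne_of_gt this)
    have hd := Polynomial.derivative_rootMultiplicity_of_root (p := P N) (t := t) hroot
    have hdg : 0 < rootMultiplicity t (derivative (P N)) := by omega
    have hdne : derivative (P N) ≠ 0 := by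
      intro h
      rw [h, rootMultiplicity_zero] at hdg
      omega
    have : (derivative (P N)).IsRoot t :=
      (Polynomial.rootMultiplicity_pos hdne).mp hdg
    exact simple_root_lemma a b ha P hP0 hpoly0 hpolyn N hN t hroot this
  · rw [Polynomial.rootMultiplicity_eq_zero hroot]
    omega
end Deg


/-- The `N`-th recurrence polynomial `P N` (with `a n > 0` and `P 0 = 1`) has
exactly `N` roots, all real and simple; moreover, if the associated Jacobi operator `J` on
`ℓ²(ℕ)` is bounded, every root of `P N` lies in `[-‖J‖, ‖J‖]`. -/
theorem recurrence_polynomial_roots_real_simple_and_bounded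
    (a b : ℕ → ℝ) (ha : ∀ n, 0 < a n) (P : ℕ → Polynomial ℝ)
    (hP0 : P 0 = 1)
    (hrec0 : ∀ t : ℝ, t * (P 0).eval t = a 0 * (P 1).eval t + b 0 * (P 0).eval t)
    (hrec : ∀ n : ℕ, 1 ≤ n → ∀ t : ℝ,
      t * (P n).eval t
        = a n * (P (n + 1)).eval t + b n * (P n).eval t + a (n - 1) * (P (n - 1)).eval t)
    (J : lp (fun _ : ℕ => ℂ) 2 →L[ℂ] lp (fun _ : ℕ => ℂ) 2)
    (hJ0 : J (e 0) = (a 0 : ℂ) • e 1 + (b 0 : ℂ) • e 0)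
    (hJ : ∀ m : ℕ, 1 ≤ m →
      J (e m) = (a m : ℂ) • e (m + 1) + (b m : ℂ) • e m + (a (m - 1) : ℂ) • e (m - 1)) :
    ∀ N : ℕ, 1 ≤ N →
      (P N).roots.card = N ∧ (P N).roots.Nodup ∧
        ∀ t ∈ (P N).roots, t ∈ Set.Icc (-‖J‖) ‖J‖ := by
  intro N hN
  -- polynomial identities
  have hpoly0 : Polynomial.C (a 0) * P 1 = Polynomial.X - Polynomial.C (b 0) := by
    apply Polynomial.funext
    intro t
    have h := hrec0 t
    rw [hP0] at h
    simp only [Polynomial.eval_one, mul_one] at h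
    simp only [Polynomial.eval_mul, Polynomial.eval_C, Polynomial.eval_sub, Polynomial.eval_X]
    linarith
  have hpolyn : ∀ n, 1 ≤ n → Polynomial.X * P n
      = Polynomial.C (a n) * P (n+1) + Polynomial.C (b n) * P n
        + Polynomial.C (a (n-1)) * P (n-1) := by
    intro n hn
    apply Polynomial.funext
    intro t
    have h := hrec n hn t
    simp only [Polynomial.eval_mul, Polynomial.eval_C, Polynomial.eval_add, Polynomial.eval_X]
    linarith
  -- complexified sequences
  set Q : ℕ → Polynomial ℂ := fun n => (P n).map (algebraMap ℝ ℂ) with hQ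
  have hQ0 : Q 0 = 1 := by rw [hQ]; simp [hP0]
  have hcrec0 : ∀ z : ℂ, z * (Q 0).eval z = (a 0 : ℂ) * (Q 1).eval z + (b 0 : ℂ) * (Q 0).eval z := by
    intro z
    have h := congrArg (fun p : Polynomial ℝ => ((p.map (algebraMap ℝ ℂ)).eval z)) hpoly0
    simp only [Polynomial.map_mul, Polynomial.map_sub, Polynomial.map_C, Polynomial.map_X,
      Polynomial.eval_mul, Polynomial.eval_sub, Polynomial.eval_C, Polynomial.eval_X] at h
    rw [hQ0]
    simp only [Polynomial.eval_one, mul_one, hQ]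
    rw [Complex.coe_algebraMap] at h
    linear_combination -h
  have hcrec : ∀ n : ℕ, 1 ≤ n → ∀ z : ℂ, z * (Q n).eval z
      = (a n : ℂ) * (Q (n+1)).eval z + (b n : ℂ) * (Q n).eval z
        + (a (n-1) : ℂ) * (Q (n-1)).eval z := by
    intro n hn z
    have h := congrArg (fun p : Polynomial ℝ => ((p.map (algebraMap ℝ ℂ)).eval z)) (hpolyn n hn)
    simp only [Polynomial.map_mul, Polynomial.map_add, Polynomial.map_C, Polynomial.map_X,
      Polynomial.eval_mul, Polynomial.eval_add, Polynomial.eval_C, Polynomial.eval_X,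
      Complex.coe_algebraMap] at h
    simp only [hQ]
    linear_combination h
  -- every complex root of (map (P N)) is real and bounded
  have hmain : ∀ z : ℂ, (Q N).eval z = 0 → z.im = 0 ∧ ‖z‖ ≤ ‖J‖ := by
    intro z hz
    refine root_real_bounded a b J hJ0 hJ (fun m => (Q m).eval z) z ?_ ?_ ?_ N hN hz
    · show (Q 0).eval z = 1
      rw [hQ0]; simp
    · exact hcrec0 z
    · exact fun n hn => hcrec n hn z
  have hdeg := deg_lemma a b ha P hP0 hpoly0 hpolyn N
  have hPne : P N ≠ 0 := Polynomial.leadingCoeff_ne_zero.mp (ne_of_gt hdeg.2)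
  refine ⟨?_, ?_, ?_⟩
  · exact aux_card N (P N) hPne hdeg.1 (fun z hz => (hmain z hz).1)
  · exact nodup_lemma a b ha P hP0 hpoly0 hpolyn N hN
  · intro t ht
    have hroot : (P N).eval t = 0 := Polynomial.isRoot_of_mem_roots ht
    have hzroot : (Q N).eval ((t : ℂ)) = 0 := by
      have h2 : (Q N).eval ((algebraMap ℝ ℂ) t) = algebraMap ℝ ℂ ((P N).eval t) := by
        rw [hQ]
        rw [Polynomial.eval_map, Polynomial.eval₂_at_apply]
      rw [Complex.coe_algebraMap] at h2
      rw [h2, hroot]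
      simp
    have habs := (hmain _ hzroot).2
    rw [Complex.norm_real, Real.norm_eq_abs] at habs
    rw [Set.mem_Icc]
    constructor <;> [linarith [neg_abs_le t]; linarith [le_abs_self t]]
end

section
/- Fix μ² > 0 and define, for m, l ∈ ℕ, P_{ml} := (1/(π μ²)) ∫_{−1}^{1} √((1+x)/(1−x)) U_m(x) U_l(x) dx, where U_n is the n-th Chebyshev polynomial of the second kind. Then P is a (two-sided, entrywise) inverse of the kinetic matrix: for all m, r ∈ ℕ, μ² (2 P_{m r} − P_{m+1, r} − P_{m−1, r}) = δ_{m r} (with the convention P_{−1, r} := 0); equivalently Σ_l G_{ml} P_{lr} = δ_{mr} where G_{ml} = μ²(2δ_{ml} − δ_{m,l+1} − δ_{l,m+1}). -/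
open Polynomial.Chebyshev

open Real MeasureTheory intervalIntegral


lemma integral_cos_int (k : ℤ) : ∫ θ in (0:ℝ)..π, Real.cos (k * θ) = if k = 0 then π else 0 := by
  rcases eq_or_ne k 0 with h | h
  · simp [h, Real.pi_pos.le]
  · have hk : (k:ℝ) ≠ 0 := Int.cast_ne_zero.2 h
    rw [if_neg h, intervalIntegral.integral_comp_mul_left _ hk]
    simp [integral_cos, Real.sin_int_mul_pi]

lemma sin_orth (m r : ℕ) : (∫ θ in (0:ℝ)..π, Real.sin ((m+1)*θ) * Real.sin ((r+1)*θ))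
    = if m = r then π/2 else 0 := by
  have h1 : ∀ θ : ℝ, Real.sin ((m+1)*θ) * Real.sin ((r+1)*θ)
      = (Real.cos ((((m:ℤ) - r) : ℤ) * θ) - Real.cos ((((m:ℤ) + r + 2) : ℤ) * θ)) / 2 := by
    intro θ
    have := Real.cos_sub_cos ((((m:ℤ) - r) : ℤ) * θ) ((((m:ℤ) + r + 2) : ℤ) * θ)
    push_cast at this ⊢
    rw [this]
    ring_nf
    rw [show -θ-θ*(r:ℝ) = -(θ+θ*r) by ring, Real.sin_neg]
    ring
  simp only [h1]
  have i1 : IntervalIntegrable (fun θ : ℝ => Real.cos ((((m:ℤ) - r) : ℤ) * θ)) volume 0 π :=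
    (by fun_prop : Continuous fun θ : ℝ => Real.cos ((((m:ℤ) - r) : ℤ) * θ)).intervalIntegrable _ _
  have i2 : IntervalIntegrable (fun θ : ℝ => Real.cos ((((m:ℤ) + r + 2) : ℤ) * θ)) volume 0 π :=
    (by fun_prop : Continuous fun θ : ℝ => Real.cos ((((m:ℤ) + r + 2) : ℤ) * θ)).intervalIntegrable _ _
  rw [intervalIntegral.integral_div, intervalIntegral.integral_sub i1 i2,
    integral_cos_int, integral_cos_int]
  have h2 : ¬ ((m:ℤ) + r + 2 = 0) := by omega
  rcases eq_or_ne m r with h | h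
  · subst h
    rw [if_pos rfl, if_neg (by omega : ¬ ((m:ℤ) + m + 2 = 0)), sub_self, if_pos rfl]
    simp
  · have : ¬ ((m:ℤ) - r = 0) := by omega
    simp [h, h2, this]

lemma cheb_orth (m r : ℕ) :
    (∫ x in (-1:ℝ)..1, Real.sqrt (1 - x^2) * ((U ℝ (m:ℤ)).eval x * (U ℝ (r:ℤ)).eval x))
      = if m = r then π/2 else 0 := by
  have hg : Continuous fun x : ℝ => Real.sqrt (1 - x^2) * ((U ℝ (m:ℤ)).eval x * (U ℝ (r:ℤ)).eval x) := by
    fun_prop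
  have sub := intervalIntegral.integral_comp_smul_deriv (a := (0:ℝ)) (b := π)
      (f := Real.cos) (f' := fun θ => -Real.sin θ)
      (g := fun x : ℝ => Real.sqrt (1 - x^2) * ((U ℝ (m:ℤ)).eval x * (U ℝ (r:ℤ)).eval x))
      (fun x _ => Real.hasDerivAt_cos x) (Real.continuous_sin.neg.continuousOn) hg
  rw [Real.cos_zero, Real.cos_pi] at sub
  rw [intervalIntegral.integral_symm (-1:ℝ) 1] at sub
  have sub2 : (∫ x in (-1:ℝ)..1, Real.sqrt (1 - x^2) * ((U ℝ (m:ℤ)).eval x * (U ℝ (r:ℤ)).eval x))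
      = -∫ θ in (0:ℝ)..π, (fun θ => -Real.sin θ) θ • ((fun x : ℝ => Real.sqrt (1 - x^2) * ((U ℝ (m:ℤ)).eval x * (U ℝ (r:ℤ)).eval x)) ∘ Real.cos) θ := by
    linarith [sub]
  rw [sub2]
  have key : ∀ θ ∈ Set.uIcc (0:ℝ) π,
      (-Real.sin θ) • ((fun x : ℝ => Real.sqrt (1 - x^2) * ((U ℝ (m:ℤ)).eval x * (U ℝ (r:ℤ)).eval x)) ∘ Real.cos) θ
        = -(Real.sin ((m+1)*θ) * Real.sin ((r+1)*θ)) := by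
    intro θ hθ
    rw [Set.uIcc_of_le Real.pi_pos.le] at hθ
    have hs : 0 ≤ Real.sin θ := Real.sin_nonneg_of_nonneg_of_le_pi hθ.1 hθ.2
    have h1 : Real.sqrt (1 - Real.cos θ^2) = Real.sin θ := by
      rw [show 1 - Real.cos θ^2 = Real.sin θ^2 by rw [Real.sin_sq]]
      exact Real.sqrt_sq hs
    have hum := U_real_cos θ (m:ℤ)
    have hur := U_real_cos θ (r:ℤ)
    push_cast at hum hur
    simp only [Function.comp_apply, smul_eq_mul, h1]
    rw [← hum, ← hur]
    ring
  rw [intervalIntegral.integral_congr key, intervalIntegral.integral_neg, neg_neg, sin_orth]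

lemma integrable_weight (p : Polynomial ℝ) :
    IntervalIntegrable (fun x => Real.sqrt ((1+x)/(1-x)) * p.eval x) volume (-1) 1 := by
  obtain ⟨M, hM⟩ := (isCompact_Icc (a := (-1:ℝ)) (b := 1)).exists_bound_of_continuousOn
    p.continuous.continuousOn
  have hM0 : 0 ≤ M := le_trans (norm_nonneg _) (hM 0 (by norm_num))
  have hg : IntervalIntegrable (fun x : ℝ => (Real.sqrt 2 * M) * (1 - x) ^ (-(1/2) : ℝ))
      volume (-1) 1 := by
    apply IntervalIntegrable.const_mul
    have h := (intervalIntegral.intervalIntegrable_rpow' (a := (0:ℝ)) (b := 2)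
      (by norm_num : (-1:ℝ) < -(1/2))).comp_sub_left 1
    norm_num at h
    exact h.symm
  apply hg.mono_fun
  · apply Measurable.aestronglyMeasurable
    exact (((measurable_const.add measurable_id).div
      (measurable_const.sub measurable_id)).sqrt).mul (Polynomial.continuous p).measurable
  · filter_upwards [MeasureTheory.ae_restrict_mem measurableSet_uIoc] with x hx
    rw [Set.uIoc_of_le (by norm_num : (-1:ℝ) ≤ 1)] at hx
    have key : Real.sqrt ((1+x)/(1-x)) ≤ Real.sqrt 2 * (1 - x) ^ (-(1/2) : ℝ) := by
      rcases eq_or_lt_of_le hx.2 with h | h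
      · subst h
        rw [sub_self, div_zero, Real.sqrt_zero, Real.zero_rpow (by norm_num)]
        positivity
      · have h1 : 0 < 1 - x := by linarith
        have h2 : (1 - x) ^ (-(1/2) : ℝ) = (Real.sqrt (1 - x))⁻¹ := by
          rw [Real.rpow_neg h1.le, ← Real.sqrt_eq_rpow]
        calc Real.sqrt ((1+x)/(1-x)) ≤ Real.sqrt (2/(1-x)) := by
              apply Real.sqrt_le_sqrt
              gcongr
              linarith [hx.1]
          _ = Real.sqrt 2 * (1 - x) ^ (-(1/2) : ℝ) := by
              rw [Real.sqrt_div (by norm_num) , h2, div_eq_mul_inv]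
    have hrhs : 0 ≤ Real.sqrt 2 * M * (1 - x) ^ (-(1/2) : ℝ) := by
      apply mul_nonneg (mul_nonneg (Real.sqrt_nonneg _) hM0)
      exact Real.rpow_nonneg (by linarith [hx.2]) _
    rw [Real.norm_eq_abs, Real.norm_eq_abs, abs_of_nonneg hrhs, abs_mul,
      abs_of_nonneg (Real.sqrt_nonneg _)]
    calc Real.sqrt ((1+x)/(1-x)) * |p.eval x| ≤ (Real.sqrt 2 * (1-x) ^ (-(1/2):ℝ)) * M := by
          apply mul_le_mul key ?_ (abs_nonneg _) ?_
          · simpa [Real.norm_eq_abs] using hM x ⟨hx.1.le, hx.2⟩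
          · exact mul_nonneg (Real.sqrt_nonneg _) (Real.rpow_nonneg (by linarith [hx.2]) _)
      _ = Real.sqrt 2 * M * (1 - x) ^ (-(1/2) : ℝ) := by ring

lemma sqrt_weight_mul (x : ℝ) :
    Real.sqrt ((1+x)/(1-x)) * (2 - 2*x) = 2 * Real.sqrt (1 - x^2) := by
  rcases lt_or_ge x 1 with h | h
  · have h1 : 0 < 1 - x := by linarith
    have key : Real.sqrt ((1+x)/(1-x)) * (1 - x) = Real.sqrt (1 - x^2) := by
      have e : Real.sqrt ((1+x)/(1-x)) * (1 - x)
          = Real.sqrt ((1+x)/(1-x)) * Real.sqrt ((1-x)^2) := by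
        rw [Real.sqrt_sq h1.le]
      rw [e, ← Real.sqrt_mul' _ (sq_nonneg (1-x)),
        show (1+x)/(1-x) * (1-x)^2 = 1 - x^2 by field_simp; ring]
    linear_combination 2 * key
  · have e1 : Real.sqrt ((1+x)/(1-x)) = 0 := by
      apply Real.sqrt_eq_zero_of_nonpos
      rcases eq_or_lt_of_le h with h' | h'
      · rw [← h', sub_self, div_zero]
      · apply div_nonpos_of_nonneg_of_nonpos <;> linarith
    have e2 : Real.sqrt (1 - x^2) = 0 := Real.sqrt_eq_zero_of_nonpos (by nlinarith)
    rw [e1, e2]; ring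

/-- The matrix elements of the propagator:
`P_{ml} = (1/(πμ²)) ∫_{−1}^{1} √((1+x)/(1−x)) U_m(x) U_l(x) dx`. -/
noncomputable def propagator (μ2 : ℝ) (m l : ℕ) : ℝ :=
  (1 / (Real.pi * μ2)) * ∫ x in (-1 : ℝ)..1,
    Real.sqrt ((1 + x) / (1 - x)) *
      ((U ℝ (m : ℤ)).eval x * (U ℝ (l : ℤ)).eval x)

/-- the propagator matrix `P` is an entrywise two-sided inverse of the kinetic
matrix `G_{ml} = μ²(2δ_{ml} − δ_{m,l+1} − δ_{l,m+1})`: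
`μ²(2 P_{mr} − P_{m+1,r} − P_{m−1,r}) = δ_{mr}` (with `P_{−1,r} := 0`). -/
theorem propagator_inverse_kinetic (μ2 : ℝ) (hμ2 : 0 < μ2) :
    ∀ m r : ℕ,
      μ2 * (2 * propagator μ2 m r - propagator μ2 (m + 1) r
          - (if m = 0 then 0 else propagator μ2 (m - 1) r))
        = if m = r then 1 else 0 := by
  intro m r
  have hπ : (Real.pi : ℝ) ≠ 0 := Real.pi_ne_zero
  set F : ℤ → ℝ → ℝ := fun n x =>
    Real.sqrt ((1 + x) / (1 - x)) * ((U ℝ n).eval x * (U ℝ (r:ℤ)).eval x) with hF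
  have hint : ∀ n : ℤ, IntervalIntegrable (F n) volume (-1) 1 := by
    intro n
    have := integrable_weight ((U ℝ n) * (U ℝ (r:ℤ)))
    simpa [hF, Polynomial.eval_mul] using this
  have hP : ∀ n : ℕ, propagator μ2 n r = (1/(Real.pi*μ2)) * ∫ x in (-1:ℝ)..1, F (n:ℤ) x := by
    intro n; rfl
  have hif : (if m = 0 then 0 else propagator μ2 (m - 1) r)
      = (1/(Real.pi*μ2)) * ∫ x in (-1:ℝ)..1, F ((m:ℤ)-1) x := by
    rcases eq_or_ne m 0 with h | h
    · rw [if_pos h, h]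
      norm_num [hF, U_neg_one]
    · rw [if_neg h, hP (m-1),
        show (((m-1 : ℕ)) : ℤ) = (m:ℤ) - 1 by omega]
  rw [hif, hP m, hP (m+1), show (((m+1 : ℕ)) : ℤ) = (m:ℤ) + 1 by omega]
  have hcomb : 2 * (∫ x in (-1:ℝ)..1, F (m:ℤ) x) - (∫ x in (-1:ℝ)..1, F ((m:ℤ)+1) x)
      - (∫ x in (-1:ℝ)..1, F ((m:ℤ)-1) x)
      = ∫ x in (-1:ℝ)..1, (2 * F (m:ℤ) x - F ((m:ℤ)+1) x - F ((m:ℤ)-1) x) := by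
    rw [intervalIntegral.integral_sub (((hint (m:ℤ)).const_mul 2).sub (hint ((m:ℤ)+1)))
        (hint ((m:ℤ)-1)),
      intervalIntegral.integral_sub ((hint (m:ℤ)).const_mul 2) (hint ((m:ℤ)+1)),
      intervalIntegral.integral_const_mul]
  have hpt : ∀ x : ℝ, 2 * F (m:ℤ) x - F ((m:ℤ)+1) x - F ((m:ℤ)-1) x
      = 2 * (Real.sqrt (1 - x^2) * ((U ℝ (m:ℤ)).eval x * (U ℝ (r:ℤ)).eval x)) := by
    intro x
    have hrec : (U ℝ ((m:ℤ)+1)).eval x + (U ℝ ((m:ℤ)-1)).eval x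
        = 2 * x * (U ℝ (m:ℤ)).eval x := by
      have h := congrArg (Polynomial.eval x) (U_add_two ℝ ((m:ℤ)-1))
      simp only [Polynomial.eval_sub, Polynomial.eval_mul, Polynomial.eval_ofNat,
        Polynomial.eval_X] at h
      rw [show (m:ℤ) - 1 + 2 = (m:ℤ) + 1 by ring, show (m:ℤ) - 1 + 1 = (m:ℤ) by ring] at h
      linarith
    have hsw := sqrt_weight_mul x
    simp only [hF]
    linear_combination (-(Real.sqrt ((1+x)/(1-x))) * (U ℝ (r:ℤ)).eval x) * hrec
      + ((U ℝ (m:ℤ)).eval x * (U ℝ (r:ℤ)).eval x) * hsw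
  set A := ∫ x in (-1:ℝ)..1, F (m:ℤ) x
  set B := ∫ x in (-1:ℝ)..1, F ((m:ℤ)+1) x
  set C := ∫ x in (-1:ℝ)..1, F ((m:ℤ)-1) x
  have hval : 2*A - B - C = 2 * (if m = r then Real.pi/2 else 0) := by
    rw [hcomb, intervalIntegral.integral_congr (fun x _ => hpt x),
      intervalIntegral.integral_const_mul, cheb_orth]
  have hred : μ2 * (2 * (1/(Real.pi*μ2) * A) - 1/(Real.pi*μ2) * B - 1/(Real.pi*μ2) * C)
      = (2*A - B - C)/Real.pi := by
    field_simp
  rw [hred, hval]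
  rcases eq_or_ne m r with h | h
  · rw [if_pos h, if_pos h]
    field_simp
  · rw [if_neg h, if_neg h]
    simp
end
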